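/- Let m ≥ 1, let d be an integer with 1 ≤ d ≤ q^m, and let s be an integer with 0 ≤ s ≤ m(q-1). Then the minimum distance of RM_q(s,m) satisfies δ(RM_q(s,m)) ≥ d if and only if s ≤ (m-c)(q-1) + q - ⌈d/q^{c-1}⌉, where c = ⌈log_q(d)⌉. -/

import Mathlib

open MvPolynomial Finset Pointwise

noncomputable section

/-- Evaluation of a multivariate polynomial at all points of `F^m`. -/
def evalPt {F : Type} [Field F] {m : ℕ} (f : MvPolynomial (Fin m) F) : (Fin m → F) → F :=
  fun P => MvPolynomial.eval P f

/-- The monomial code `C_A = ev(F_q[A])`, the evaluations of the polynomials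
whose monomial support is contained in `A`. -/
def monomialCode (F : Type) [Field F] (m : ℕ) (A : Set (Fin m →₀ ℕ)) :
    Set ((Fin m → F) → F) :=
  { v | ∃ f : MvPolynomial (Fin m) F, (↑f.support : Set (Fin m →₀ ℕ)) ⊆ A ∧ v = evalPt f }

/-- Exponent set of the Reed–Muller code `RM_q(s,m)` (empty when `s < 0`). -/
def RMset (q m : ℕ) (s : ℤ) : Set (Fin m →₀ ℕ) :=
  { i | (∀ j, i j < q) ∧ (∑ j, (i j : ℤ)) ≤ s }

/-- Exponent set of the hyperbolic code `Hyp_q(d,m)`. -/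
def Hypset (q m d : ℕ) : Set (Fin m →₀ ℕ) :=
  { i | (∀ j, i j < q) ∧ d ≤ ∏ j, (q - i j) }

/-- Exponent set of the cube code `Cube_q(s,m)`. -/
def Cubeset (m s : ℕ) : Set (Fin m →₀ ℕ) :=
  { i | ∀ j, i j ≤ s }

/-- Minimum distance of a code: least Hamming weight of a nonzero codeword. -/
def minDist {F : Type} [Field F] [Fintype F] [DecidableEq F] {m : ℕ}
    (C : Set ((Fin m → F) → F)) : ℕ :=
  sInf { w | ∃ v ∈ C, v ≠ 0 ∧ hammingNorm v = w }

/-- Hamming distance from a word to a code. -/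
def distToCode {F : Type} [Field F] [Fintype F] [DecidableEq F] {m : ℕ}
    (y : (Fin m → F) → F) (C : Set ((Fin m → F) → F)) : ℕ :=
  sInf { w | ∃ c ∈ C, hammingDist y c = w }

/-- `i`-fold Minkowski sum of `H` with itself (`0`-fold sum is `{0}`). -/
def iMink {m : ℕ} (H : Set (Fin m →₀ ℕ)) : ℕ → Set (Fin m →₀ ℕ)
  | 0 => {0}
  | i + 1 => iMink H i + H

/-- The sets `L(d,r,i)` from the Geil–Matsumoto list-decoding algorithm. -/
def Lset (q m d r i : ℕ) : Set (Fin m →₀ ℕ) :=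
  { a | (∀ j, a j < q) ∧ ∀ x ∈ iMink (Hypset q m d) i, a + x ∈ Hypset q m (r + 1) }


section AuxiliaryRM

open MvPolynomial Finset


/-- claimed minimum distance of RM_q(s,m) -/
def Wf (q : ℕ) : ℕ → ℕ → ℕ
  | 0, _ => 1
  | m + 1, s => if s ≤ q - 1 then (q - s) * q ^ m else Wf q m (s - (q - 1))

lemma Wf_pos {q : ℕ} (hq : 2 ≤ q) : ∀ m s, 1 ≤ Wf q m s := by
  intro m
  induction m with
  | zero => intro s; simp [Wf]
  | succ m ih =>
    intro s
    rw [Wf]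
    split
    · have h1 : 1 ≤ q - s := by omega
      have h2 : 1 ≤ q ^ m := Nat.one_le_pow _ _ (by omega)
      nlinarith
    · exact ih _

/-- shift lemma -/
lemma Wf_shift {q : ℕ} (hq : 2 ≤ q) : ∀ m s k, k ≤ q - 1 →
    Wf q m s ≤ (k + 1) * Wf q m (s + k) := by
  intro m
  induction m with
  | zero => intro s k _; simp [Wf]
  | succ m ih =>
    intro s k hk
    rw [Wf, Wf]
    by_cases h1 : s + k ≤ q - 1
    · rw [if_pos (by omega), if_pos h1]
      have h2 : q - s ≤ (k+1) * (q - (s+k)) := by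
        have key : ∀ A : ℕ, A + 1 + k ≤ (k+1) * (A+1) := fun A => by nlinarith
        have := key (q - (s+k) - 1)
        have e1 : q - (s+k) - 1 + 1 = q - (s+k) := by omega
        have e2 : q - (s+k) - 1 + 1 + k = q - s := by omega
        rwa [e2, e1] at this
      calc (q - s) * q ^ m ≤ ((k+1) * (q - (s+k))) * q ^ m := Nat.mul_le_mul_right _ h2
        _ = (k+1) * ((q - (s+k)) * q ^ m) := by ring
    · by_cases h0 : s ≤ q - 1
      · rw [if_pos h0, if_neg h1]
        have hj : s + k - (q - 1) ≤ q - 1 := by omega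
        cases m with
        | zero =>
          simp only [Wf, pow_zero, mul_one]
          omega
        | succ m' =>
          rw [Wf, if_pos hj]
          have key : (q - s) * q ≤ (k + 1) * (q - (s + k - (q-1))) := by
            have key' : ∀ a B : ℕ, a ≤ k + 1 → a * ((k+1) + B) ≤ (k+1) * (a + B) :=
              fun a B h => by nlinarith
            have := key' (q - s) (q - (k+1)) (by omega)
            have e1 : (k+1) + (q - (k+1)) = q := by omega
            have e2 : (q - s) + (q - (k+1)) = q - (s + k - (q-1)) := by omega
            rwa [e1, e2] at this
          calc (q - s) * q ^ (m' + 1) = ((q - s) * q) * q ^ m' := by ring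
            _ ≤ ((k+1) * (q - (s + k - (q-1)))) * q ^ m' := Nat.mul_le_mul_right _ key
            _ = (k+1) * ((q - (s + k - (q-1))) * q ^ m') := by ring
      · rw [if_neg h0, if_neg h1]
        have := ih (s - (q-1)) k hk
        have heq : s - (q-1) + k = s + k - (q-1) := by omega
        rwa [heq] at this

lemma Wf_step {q : ℕ} (hq : 2 ≤ q) (m s t : ℕ) (ht : t ≤ q - 1) (hts : t ≤ s) :
    Wf q (m+1) s ≤ (q - t) * Wf q m (s - t) := by
  by_cases h0 : s ≤ q - 1
  · rw [Wf, if_pos h0]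
    cases m with
    | zero => simp only [Wf, pow_zero, mul_one]; omega
    | succ m' =>
      rw [Wf, if_pos (by omega)]
      have key : (q - s) * q ≤ (q - t) * (q - (s - t)) := by
        have key' : ∀ a u : ℕ, a * (a + u + t) ≤ (a + u) * (a + t) := fun a u => by nlinarith
        have := key' (q - s) (s - t)
        have e1 : q - s + (s - t) + t = q := by omega
        have e2 : q - s + (s - t) = q - t := by omega
        have e3 : q - s + t = q - (s - t) := by omega
        rwa [e1, e2, e3] at this
      calc (q - s) * q ^ (m' + 1) = ((q - s) * q) * q ^ m' := by ring
        _ ≤ ((q - t) * (q - (s - t))) * q ^ m' := Nat.mul_le_mul_right _ key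
        _ = (q - t) * ((q - (s - t)) * q ^ m') := by ring
  · rw [Wf, if_neg h0]
    have := Wf_shift hq m (s - (q-1)) (q - 1 - t) (by omega)
    have heq : s - (q-1) + (q - 1 - t) = s - t := by omega
    have heq2 : q - 1 - t + 1 = q - t := by omega
    rw [heq, heq2] at this
    exact this

/-- Key arithmetic equivalence. -/
lemma Wf_iff {q d n e : ℕ} (hq : 2 ≤ q) (hn : 1 ≤ n) (he2 : 2 ≤ e) (heq : e ≤ q)
    (hd1 : q ^ (n-1) < d) (hd2 : d ≤ e * q ^ (n-1)) (hd3 : (e-1) * q ^ (n-1) < d) :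
    ∀ m s, (d ≤ Wf q m s ↔ (n-1)*(q-1) + (e-1) + s ≤ m*(q-1)) := by
  intro m
  induction m with
  | zero =>
    intro s
    simp only [Wf, Nat.zero_mul]
    constructor
    · intro h
      exfalso
      have : 2 ≤ d := lt_of_le_of_lt (Nat.one_le_pow _ _ (by omega)) hd1
      omega
    · intro h; exfalso; generalize (n-1)*(q-1) = K at h; omega
  | succ m ih =>
    intro s
    rw [Wf]
    by_cases h0 : s ≤ q - 1
    · rw [if_pos h0]
      rcases lt_trichotomy n (m+1) with hnm | hnm | hnm
      · -- n ≤ m : both sides true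
        have hL : d ≤ (q - s) * q ^ m := by
          have h1 : d ≤ q ^ n := le_trans hd2 (by
            calc e * q ^ (n-1) ≤ q * q ^ (n-1) := Nat.mul_le_mul_right _ heq
              _ = q ^ n := by rw [← pow_succ']; congr 1; omega)
          have h2 : q ^ n ≤ q ^ m := Nat.pow_le_pow_right (by omega) (by omega)
          have h3 : q ^ m ≤ (q - s) * q ^ m := by
            have : 1 ≤ q - s := by omega
            nlinarith
          omega
        have hR : (n-1)*(q-1) + (e-1) + s ≤ (m+1)*(q-1) := by
          have : (n-1)*(q-1) + (q-1) ≤ m * (q-1) := by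
            have : (n-1) + 1 ≤ m := by omega
            calc (n-1)*(q-1) + (q-1) = ((n-1)+1) * (q-1) := by ring
              _ ≤ m * (q-1) := Nat.mul_le_mul_right _ this
          have hstep : (m+1)*(q-1) = m*(q-1) + (q-1) := by ring
          omega
        simp [hL, hR]
      · -- n = m+1
        have hm1 : n - 1 = m := by omega
        rw [hm1] at hd1 hd2 hd3
        constructor
        · intro h
          -- derive e ≤ q - s then linear
          have hes : e - 1 < q - s := by
            by_contra hcon
            push_neg at hcon
            have : (q - s) * q ^ m ≤ (e-1) * q ^ m := Nat.mul_le_mul_right _ hcon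
            omega
          have hstep : (m+1)*(q-1) = m*(q-1) + (q-1) := by ring
          rw [hstep, hm1]
          omega
        · intro h
          have hstep : (m+1)*(q-1) = m*(q-1) + (q-1) := by ring
          rw [hstep, hm1] at h
          have hes : e ≤ q - s := by omega
          calc d ≤ e * q ^ m := hd2
            _ ≤ (q - s) * q ^ m := Nat.mul_le_mul_right _ hes
      · -- n ≥ m+2 : both sides false
        have hL : ¬ d ≤ (q - s) * q ^ m := by
          push_neg
          calc (q - s) * q ^ m ≤ q * q ^ m := Nat.mul_le_mul_right _ (by omega)
            _ = q ^ (m+1) := by rw [pow_succ']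
            _ ≤ q ^ (n-1) := Nat.pow_le_pow_right (by omega) (by omega)
            _ < d := hd1
        have hR : ¬ ((n-1)*(q-1) + (e-1) + s ≤ (m+1)*(q-1)) := by
          push_neg
          have : (m+1)*(q-1) < (n-1)*(q-1) + 1 := by
            have h1 : (m+1) ≤ (n-1) := by omega
            have := Nat.mul_le_mul_right (q-1) h1
            omega
          omega
        simp [hL, hR]
    · rw [if_neg h0]
      rw [ih (s - (q-1))]
      have hstep : (m+1)*(q-1) = m*(q-1) + (q-1) := by ring
      rw [hstep]
      generalize (n-1)*(q-1) = K
      omega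


lemma card_filter_succ {F : Type} [Fintype F] [DecidableEq F] {m : ℕ}
    (C : (Fin (m+1) → F) → Prop) [DecidablePred C] :
    (univ.filter fun P => C P).card
      = ∑ x : Fin m → F, (univ.filter fun x₀ => C (Fin.cons x₀ x)).card := by
  rw [Finset.card_eq_sum_card_fiberwise
    (f := fun P : Fin (m+1) → F => Fin.tail P) (t := univ) (fun _ _ => mem_univ _)]
  refine Finset.sum_congr rfl fun x _ => ?_
  refine Finset.card_bij' (fun P _ => P 0) (fun x₀ _ => Fin.cons x₀ x) ?_ ?_ ?_ ?_
  · intro P hP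
    simp only [mem_filter, mem_univ, true_and] at hP ⊢
    obtain ⟨h1, h2⟩ := hP
    rwa [← h2, Fin.cons_self_tail]
  · intro x₀ hx₀
    simp only [mem_filter, mem_univ, true_and] at hx₀ ⊢
    exact ⟨hx₀, Fin.tail_cons _ _⟩
  · intro P hP
    simp only [mem_filter, mem_univ, true_and] at hP
    obtain ⟨-, h2⟩ := hP
    subst h2
    exact Fin.cons_self_tail P
  · intro x₀ _
    simp [Fin.cons_zero]

lemma univariate_count {F : Type} [Field F] [Fintype F] [DecidableEq F]
    (p : Polynomial F) (hp : p ≠ 0) (t : ℕ) (hdeg : p.natDegree ≤ t) :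
    Fintype.card F - t ≤ (univ.filter fun x => p.eval x ≠ 0).card := by
  have hzero : (univ.filter fun x => p.eval x = 0).card ≤ t := by
    have hsub : (univ.filter fun x => p.eval x = 0) ⊆ p.roots.toFinset := by
      intro x hx
      simp only [mem_filter, mem_univ, true_and] at hx
      rw [Multiset.mem_toFinset, Polynomial.mem_roots hp]
      exact hx
    calc (univ.filter fun x => p.eval x = 0).card ≤ p.roots.toFinset.card :=
          Finset.card_le_card hsub
      _ ≤ Multiset.card p.roots := Multiset.toFinset_card_le _
      _ ≤ p.natDegree := p.card_roots'
      _ ≤ t := hdeg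
  have := Finset.card_filter_add_card_filter_not
    (s := (univ : Finset F)) (p := fun x => p.eval x = 0)
  simp only [Finset.card_univ] at this
  simp only [ne_eq]
  omega

lemma low_bound {F : Type} [Field F] [Fintype F] [DecidableEq F] :
    ∀ (m s : ℕ) (f : MvPolynomial (Fin m) F), f ≠ 0 →
      (∀ i ∈ f.support, ∀ j, i j < Fintype.card F) → f.totalDegree ≤ s →
      Wf (Fintype.card F) m s ≤ (univ.filter fun P : Fin m → F => eval P f ≠ 0).card := by
  intro m
  induction m with
  | zero =>
    intro s f hf hsup hdeg
    have hssup : f.support = {0} := by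
      obtain ⟨d, hd⟩ := (MvPolynomial.support_nonempty).mpr hf
      have : d = 0 := Subsingleton.elim _ _
      subst this
      apply Finset.eq_singleton_iff_unique_mem.mpr
      exact ⟨hd, fun x _ => Subsingleton.elim _ _⟩
    have hc0 : f.coeff 0 ≠ 0 := by
      rw [← MvPolynomial.mem_support_iff, hssup]; exact Finset.mem_singleton_self _
    have heval : ∀ P : Fin 0 → F, eval P f = f.coeff 0 := by
      intro P
      rw [MvPolynomial.eval_eq, hssup, Finset.sum_singleton]
      simp
    have hne : (default : Fin 0 → F) ∈ (univ.filter fun P : Fin 0 → F => eval P f ≠ 0) := by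
      simp [heval, hc0]
    have : 1 ≤ (univ.filter fun P : Fin 0 → F => eval P f ≠ 0).card :=
      Finset.card_pos.mpr ⟨_, hne⟩
    simpa [Wf] using this
  | succ m ih =>
    intro s f hf hsup hdeg
    set q := Fintype.card F with hqdef
    have hq2 : 2 ≤ q := Fintype.one_lt_card
    set p := finSuccEquiv F m f with hpdef
    have hp : p ≠ 0 := by
      intro h
      exact hf ((finSuccEquiv F m).injective (by simp [← hpdef, h]))
    set t := p.natDegree with htdef
    set g := p.coeff t with hgdef
    have hg : g ≠ 0 := by
      rw [hgdef, htdef, ← Polynomial.leadingCoeff]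
      exact Polynomial.leadingCoeff_ne_zero.mpr hp
    have ht : t ≤ q - 1 := by
      rw [htdef, hpdef, natDegree_finSuccEquiv]
      rw [degreeOf_le_iff]
      intro i hi
      have := hsup i hi 0
      omega
    have htot : g.totalDegree + t ≤ f.totalDegree :=
      totalDegree_coeff_finSuccEquiv_add_le f t hg
    have hts : t ≤ s := by omega
    have hgdeg : g.totalDegree ≤ s - t := by omega
    have hgsup : ∀ i ∈ g.support, ∀ j, i j < Fintype.card F := by
      intro i hi j
      have h2 : i.cons t ∈ f.support := mem_support_coeff_finSuccEquiv.mp hi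
      have := hsup _ h2 j.succ
      rwa [Finsupp.cons_succ] at this
    have hIH := ih (s - t) g hg hgsup hgdeg
    -- per-fiber bound
    have hfiber : ∀ x : Fin m → F, eval x g ≠ 0 →
        q - t ≤ (univ.filter fun x₀ : F => eval (Fin.cons x₀ x) f ≠ 0).card := by
      intro x hx
      have hPx : (p.map (eval x)) ≠ 0 := by
        intro h
        apply hx
        have : (p.map (eval x)).coeff t = 0 := by rw [h]; simp
        rwa [Polynomial.coeff_map] at this
      have hPdeg : (p.map (eval x)).natDegree ≤ t := Polynomial.natDegree_map_le
      have := univariate_count (p.map (eval x)) hPx t hPdeg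
      have hset : (univ.filter fun x₀ : F => eval (Fin.cons x₀ x) f ≠ 0)
          = (univ.filter fun x₀ : F => Polynomial.eval x₀ (p.map (eval x)) ≠ 0) := by
        ext x₀
        simp only [mem_filter, mem_univ, true_and]
        rw [eval_eq_eval_mv_eval', ← hpdef]
      rw [hset]
      exact this

    calc Wf q (m+1) s ≤ (q - t) * Wf q m (s - t) := Wf_step hq2 m s t ht hts
      _ ≤ (q - t) * (univ.filter fun x : Fin m → F => eval x g ≠ 0).card :=
          Nat.mul_le_mul_left _ hIH
      _ = ∑ _x ∈ (univ.filter fun x : Fin m → F => eval x g ≠ 0), (q - t) := by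
          rw [Finset.sum_const, smul_eq_mul, mul_comm]
      _ ≤ ∑ x ∈ (univ.filter fun x : Fin m → F => eval x g ≠ 0),
            (univ.filter fun x₀ : F => eval (Fin.cons x₀ x) f ≠ 0).card := by
          apply Finset.sum_le_sum
          intro x hx
          simp only [mem_filter, mem_univ, true_and] at hx
          exact hfiber x hx
      _ ≤ ∑ x : Fin m → F, (univ.filter fun x₀ : F => eval (Fin.cons x₀ x) f ≠ 0).card :=
          Finset.sum_le_sum_of_subset (Finset.filter_subset _ _)
      _ = (univ.filter fun P : Fin (m+1) → F => eval P f ≠ 0).card :=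
          (card_filter_succ fun P => eval P f ≠ 0).symm

lemma Wf_zero {q : ℕ} (hq : 2 ≤ q) : ∀ m, Wf q m 0 = q ^ m := by
  intro m
  induction m with
  | zero => simp [Wf]
  | succ m ih => rw [Wf, if_pos (by omega), Nat.sub_zero, pow_succ, mul_comm]

lemma degreeOf_factor_le {F : Type} [Field F] {m : ℕ} (c : F) (i j : Fin m) :
    degreeOf j (X i - C c) ≤ if j = i then 1 else 0 := by
  have h1 : (X i - C c : MvPolynomial (Fin m) F) = X i + C (-c) := by
    rw [map_neg, sub_eq_add_neg]
  rw [h1]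
  refine le_trans (degreeOf_add_le _ _ _) ?_
  rw [degreeOf_X, degreeOf_C]
  simp

lemma degreeOf_prod_factor_le {F : Type} [Field F] {m : ℕ} (T : Finset F) (i j : Fin m) :
    degreeOf j (∏ c ∈ T, (X i - C c) : MvPolynomial (Fin m) F)
      ≤ T.card * (if j = i then 1 else 0) := by
  classical
  induction T using Finset.induction with
  | empty =>
    simp only [Finset.prod_empty, Finset.card_empty, Nat.zero_mul, Nat.le_zero,
      ← MvPolynomial.C_1, MvPolynomial.degreeOf_C]
  | @insert a T' hc ih =>
    rw [Finset.prod_insert hc, Finset.card_insert_of_notMem hc]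
    refine le_trans (degreeOf_mul_le _ _ _) ?_
    have := degreeOf_factor_le (F := F) a i j
    split <;> rename_i h <;> simp [h] at this ih ⊢ <;> omega

lemma upper_exists {F : Type} [Field F] [Fintype F] [DecidableEq F] :
    ∀ (m s : ℕ), ∃ f : MvPolynomial (Fin m) F,
      (∀ j, degreeOf j f ≤ Fintype.card F - 1) ∧ f.totalDegree ≤ s ∧
      (univ.filter fun P : Fin m → F => eval P f ≠ 0).card = Wf (Fintype.card F) m s := by
  intro m
  set q := Fintype.card F with hqdef
  have hq2 : 2 ≤ q := Fintype.one_lt_card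
  induction m with
  | zero =>
    intro s
    refine ⟨1, fun j => j.elim0, by simp, ?_⟩
    have : (univ.filter fun P : Fin 0 → F => eval P (1 : MvPolynomial (Fin 0) F) ≠ 0) = univ := by
      simp
    rw [this, Wf]
    simp [Finset.card_univ]
  | succ m ih =>
    intro s
    obtain ⟨f', hdeg', htot', hcard'⟩ := ih (s - (q - 1))
    obtain ⟨T, -, hT⟩ : ∃ T ⊆ (univ : Finset F), T.card = min s (q-1) :=
      Finset.exists_subset_card_eq (by rw [Finset.card_univ]; omega)
    set A : MvPolynomial (Fin (m+1)) F := ∏ c ∈ T, (X 0 - C c) with hA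
    refine ⟨A * rename Fin.succ f', ?_, ?_, ?_⟩
    · -- degreeOf bound
      intro j
      refine le_trans (degreeOf_mul_le _ _ _) ?_
      rcases Fin.eq_zero_or_eq_succ j with rfl | ⟨k, rfl⟩
      · have h1 : degreeOf (0 : Fin (m+1)) A ≤ T.card := by
          have := degreeOf_prod_factor_le (F := F) (m := m+1) T 0 0
          rw [if_pos rfl, mul_one] at this
          exact this
        have h2 : degreeOf (0 : Fin (m+1)) (rename Fin.succ f') = 0 := by
          classical
          rw [degreeOf_def, degrees_rename_of_injective (Fin.succ_injective m)]
          apply Multiset.count_eq_zero_of_notMem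
          intro h
          obtain ⟨a, -, ha⟩ := Multiset.mem_map.mp h
          exact Fin.succ_ne_zero a ha
        rw [h2]
        omega
      · have h1 : degreeOf k.succ A = 0 := by
          have := degreeOf_prod_factor_le T 0 k.succ
          simpa [Fin.succ_ne_zero k] using this
        have h2 : degreeOf k.succ (rename Fin.succ f') = degreeOf k f' :=
          degreeOf_rename_of_injective (Fin.succ_injective m) k
        rw [h1, h2, Nat.zero_add]
        exact hdeg' k
    · -- totalDegree
      have h1 : A.totalDegree ≤ T.card := by
        refine le_trans (totalDegree_finset_prod _ _) ?_
        refine le_trans (Finset.sum_le_sum fun c _ => ?_) (by rw [Finset.sum_const, smul_eq_mul, mul_one])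
        exact le_trans (totalDegree_sub_C_le _ _) (le_of_eq (totalDegree_X _))
      have h2 : (rename Fin.succ f').totalDegree ≤ s - (q-1) :=
        le_trans (totalDegree_rename_le _ _) htot'
      refine le_trans (totalDegree_mul _ _) ?_
      omega
    · -- weight
      rw [card_filter_succ (C := fun P => eval P (A * rename Fin.succ f') ≠ 0)]
      have hev : ∀ (x₀ : F) (x : Fin m → F),
          eval (Fin.cons x₀ x) (A * rename Fin.succ f')
            = (∏ c ∈ T, (x₀ - c)) * eval x f' := by
        intro x₀ x
        rw [map_mul, eval_rename]
        have hcs : (Fin.cons x₀ x : Fin (m+1) → F) ∘ Fin.succ = x := by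
          funext k; simp [Fin.cons_succ]
        rw [hcs]
        congr 1
        rw [hA, map_prod]
        refine Finset.prod_congr rfl fun c _ => ?_
        simp [Fin.cons_zero]
      have hstep : ∀ x : Fin m → F,
          (univ.filter fun x₀ : F => eval (Fin.cons x₀ x) (A * rename Fin.succ f') ≠ 0).card
            = if eval x f' ≠ 0 then q - T.card else 0 := by
        intro x
        split <;> rename_i hx
        · have : (univ.filter fun x₀ : F => eval (Fin.cons x₀ x) (A * rename Fin.succ f') ≠ 0)
              = Tᶜ := by
            ext x₀
            simp only [mem_filter, mem_univ, true_and, Finset.mem_compl, hev,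
              mul_ne_zero_iff, Finset.prod_ne_zero_iff, sub_ne_zero]
            constructor
            · intro h hmem; exact h.1 x₀ hmem rfl
            · intro h; exact ⟨fun c hc hne => h (hne ▸ hc), hx⟩
          rw [this, Finset.card_compl, ← hqdef]
        · push_neg at hx
          have : (univ.filter fun x₀ : F => eval (Fin.cons x₀ x) (A * rename Fin.succ f') ≠ 0)
              = ∅ := by
            refine Finset.filter_false_of_mem fun x₀ _ => ?_
            rw [hev]
            simp [hx]
          rw [this, Finset.card_empty]
      calc ∑ x : Fin m → F,
            (univ.filter fun x₀ : F => eval (Fin.cons x₀ x) (A * rename Fin.succ f') ≠ 0).card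
          = ∑ x : Fin m → F, if eval x f' ≠ 0 then q - T.card else 0 :=
            Finset.sum_congr rfl fun x _ => hstep x
        _ = ∑ x ∈ (univ.filter fun x : Fin m → F => eval x f' ≠ 0), (q - T.card) := by
            rw [Finset.sum_filter]
        _ = (q - T.card) * Wf q m (s - (q-1)) := by
            rw [Finset.sum_const, smul_eq_mul, hcard', mul_comm]
        _ = Wf q (m+1) s := by
            rw [Wf]
            split <;> rename_i h
            · have : s - (q-1) = 0 := by omega
              rw [this, Wf_zero hq2, hT]
              have : min s (q-1) = s := by omega
              rw [this]
            · have : min s (q-1) = q - 1 := by omega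
              rw [hT, this]
              have : q - (q-1) = 1 := by omega
              rw [this, one_mul]


variable {F : Type} [Field F] [Fintype F] [DecidableEq F]

lemma hammingNorm_evalPt {m : ℕ} (f : MvPolynomial (Fin m) F) :
    hammingNorm (evalPt f) = (univ.filter fun P : Fin m → F => eval P f ≠ 0).card := rfl

lemma totalDegree_eq_sum_bound {m : ℕ} {f : MvPolynomial (Fin m) F} {i : Fin m →₀ ℕ}
    (hi : i ∈ f.support) : ∑ j, i j ≤ f.totalDegree := by
  have h1 : i.sum (fun _ e => e) ≤ f.totalDegree := MvPolynomial.le_totalDegree hi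
  rwa [Finsupp.sum_fintype _ _ (fun _ => rfl)] at h1

lemma minDist_RM (m s : ℕ) :
    minDist (monomialCode F m (RMset (Fintype.card F) m (s : ℤ))) = Wf (Fintype.card F) m s := by
  set q := Fintype.card F with hqdef
  have hq2 : 2 ≤ q := Fintype.one_lt_card
  set SS := { w | ∃ v ∈ monomialCode F m (RMset q m (s:ℤ)), v ≠ 0 ∧ hammingNorm v = w } with hSS
  have hmem : Wf q m s ∈ SS := by
    obtain ⟨f, hdeg, htot, hcard⟩ := upper_exists (F := F) m s
    rw [← hqdef] at hcard hdeg
    refine ⟨evalPt f, ⟨f, ?_, rfl⟩, ?_, ?_⟩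
    · intro i hi
      refine ⟨fun j => ?_, ?_⟩
      · have := MvPolynomial.monomial_le_degreeOf j hi
        have := hdeg j
        omega
      · have h1 : ∑ j, i j ≤ s := le_trans (totalDegree_eq_sum_bound hi) htot
        calc ∑ j, (i j : ℤ) = ((∑ j, i j : ℕ) : ℤ) := by push_cast; ring
          _ ≤ (s : ℤ) := by exact_mod_cast h1
    · intro h0
      have hz : hammingNorm (evalPt f) = 0 := by rw [h0]; simp [hammingNorm]
      rw [hammingNorm_evalPt, hcard] at hz
      have hp := Wf_pos hq2 m s
      omega
    · rw [hammingNorm_evalPt, hcard]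
  have hlow : ∀ w ∈ SS, Wf q m s ≤ w := by
    rintro w ⟨v, ⟨f, hsub, rfl⟩, hv0, rfl⟩
    have hf0 : f ≠ 0 := by rintro rfl; exact hv0 (by funext P; simp [evalPt])
    have hsup : ∀ i ∈ f.support, ∀ j, i j < q := fun i hi j => (hsub hi).1 j
    have htot : f.totalDegree ≤ s := by
      apply Finset.sup_le
      intro i hi
      rw [Finsupp.sum_fintype _ _ (fun _ => rfl)]
      have h2 : ∑ j, (i j : ℤ) ≤ (s : ℤ) := (hsub hi).2
      have : ((∑ j, i j : ℕ) : ℤ) ≤ (s:ℤ) := by push_cast; exact_mod_cast h2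
      exact_mod_cast this
    rw [hammingNorm_evalPt]
    have := low_bound m s f hf0 (by rw [← hqdef]; exact hsup) htot
    rwa [← hqdef] at this
  have hne : SS.Nonempty := ⟨_, hmem⟩
  exact le_antisymm (Nat.sInf_le hmem) (hlow _ (Nat.sInf_mem hne))


end AuxiliaryRM

open MvPolynomial Finset in
/-- `δ(RM_q(s,m)) ≥ d` iff `s ≤ (m-c)(q-1) + q - ⌈d/q^{c-1}⌉`,
where `c = ⌈log_q d⌉`. -/
theorem statement7 (F : Type) [Field F] [Fintype F] [DecidableEq F]
    (q m d s : ℕ) (hq : Fintype.card F = q) (hm : 1 ≤ m) (hd1 : 1 ≤ d) (hd2 : d ≤ q ^ m)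
    (hs : s ≤ m * (q - 1)) (c : ℤ) (hc : c = ⌈Real.logb q d⌉) :
    d ≤ minDist (monomialCode F m (RMset q m (s : ℤ))) ↔
      (s : ℤ) ≤ ((m : ℤ) - c) * ((q : ℤ) - 1) + (q : ℤ) - ⌈(d : ℝ) / (q : ℝ) ^ (c - 1)⌉ := by
  subst hq
  set q := Fintype.card F with hqdef
  have hq2 : 2 ≤ q := Fintype.one_lt_card
  rw [minDist_RM, ← hqdef]
  rcases eq_or_lt_of_le hd1 with hd | hd
  · -- d = 1
    have hd' : d = 1 := hd.symm
    subst hd'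
    have hc0 : c = 0 := by rw [hc]; simp
    subst hc0
    have hceil : ⌈(1 : ℝ) / (q : ℝ) ^ (-1 : ℤ)⌉ = (q : ℤ) := by
      rw [zpow_neg, zpow_one, one_div, inv_inv, Int.ceil_natCast]
    have hL : 1 ≤ Wf q m s := Wf_pos hq2 m s
    have hcast : (s : ℤ) ≤ (m : ℤ) * ((q:ℤ) - 1) := by
      have h2 : ((m * (q-1) : ℕ) : ℤ) = (m:ℤ) * ((q:ℤ) - 1) := by
        push_cast [Nat.cast_sub (by omega : 1 ≤ q)]; ring
      rw [← h2]
      exact_mod_cast hs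
    push_cast
    rw [hceil]
    exact iff_of_true hL (by push_cast; linarith)
  · -- d ≥ 2
    have hq1R : (1 : ℝ) < (q : ℝ) := by exact_mod_cast hq2
    have hd1R : (1 : ℝ) < (d : ℝ) := by exact_mod_cast hd
    have hdposR : (0 : ℝ) < (d : ℝ) := by linarith
    have hlogpos : 0 < Real.logb q d := Real.logb_pos hq1R hd1R
    have hc1 : 1 ≤ c := by
      have : (0:ℤ) < c := by rw [hc]; exact Int.lt_ceil.mpr (by exact_mod_cast hlogpos)
      omega
    set n := c.toNat with hndef
    have hcn : (n : ℤ) = c := Int.toNat_of_nonneg (by omega)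
    have hn1 : 1 ≤ n := by omega
    -- real bounds
    have hub : Real.logb q d ≤ (c : ℝ) := by rw [hc]; exact Int.le_ceil _
    have hlb : (c : ℝ) - 1 < Real.logb q d := by
      by_contra hcon
      push_neg at hcon
      have h1 : Real.logb q d ≤ ((c - 1 : ℤ) : ℝ) := by push_cast; linarith
      have h2 : ⌈Real.logb q d⌉ ≤ c - 1 := Int.ceil_le.mpr h1
      omega
    have hrpow : (q : ℝ) ^ (Real.logb q d) = d :=
      Real.rpow_logb (by linarith) (by linarith) hdposR
    have hdq : d ≤ q ^ n := by
      have h1 : (d : ℝ) ≤ (q:ℝ) ^ (n : ℝ) := by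
        rw [← hrpow]
        apply Real.rpow_le_rpow_left_iff hq1R |>.mpr
        rw [← hcn] at hub
        exact_mod_cast hub
      have h2 : (q:ℝ) ^ (n:ℝ) = ((q ^ n : ℕ) : ℝ) := by
        rw [Real.rpow_natCast]; push_cast; ring
      rw [h2] at h1
      exact_mod_cast h1
    have hqd : q ^ (n - 1) < d := by
      have h1 : (q:ℝ) ^ ((n:ℝ) - 1) < (d : ℝ) := by
        rw [← hrpow]
        apply Real.rpow_lt_rpow_left_iff hq1R |>.mpr
        rw [← hcn] at hlb
        exact_mod_cast hlb
      have h2 : (q:ℝ) ^ ((n:ℝ) - 1) = ((q ^ (n-1) : ℕ) : ℝ) := by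
        rw [show (n:ℝ) - 1 = ((n - 1 : ℕ) : ℝ) by push_cast [Nat.cast_sub hn1]; ring,
          Real.rpow_natCast]
        push_cast; ring
      rw [h2] at h1
      exact_mod_cast h1
    -- ceiling division
    set b := q ^ (n - 1) with hbdef
    have hbpos : 0 < b := Nat.pow_pos (by omega)
    set e := (d + b - 1) / b with hedef
    have hmod : b * ((d + b - 1) / b) + (d + b - 1) % b = d + b - 1 := Nat.div_add_mod _ _
    have hmlt : (d + b - 1) % b < b := Nat.mod_lt _ hbpos
    have hcomm : b * e = e * b := mul_comm _ _
    have he1 : d ≤ e * b := by rw [← hedef] at hmod; omega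
    have he2' : e * b < d + b := by rw [← hedef] at hmod; omega
    have hE2 : (e - 1) * b = e * b - b := by rw [Nat.sub_mul, one_mul]
    have he3 : (e - 1) * b < d := by omega
    have he_ge2 : 2 ≤ e := by
      by_contra hcon
      push_neg at hcon
      have : e * b ≤ 1 * b := Nat.mul_le_mul_right b (by omega)
      rw [one_mul] at this
      omega
    have he_leq : e ≤ q := by
      have hq_n : q ^ n = q * b := by rw [hbdef, ← pow_succ']; congr 1; omega
      have : (e - 1) * b < q * b := by
        calc (e-1) * b < d := he3
          _ ≤ q ^ n := hdq
          _ = q * b := hq_n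
      have := Nat.lt_of_mul_lt_mul_right this
      omega
    -- ceiling identity
    have hceil : ⌈(d : ℝ) / (q : ℝ) ^ (c - 1)⌉ = (e : ℤ) := by
      have hzb : (q : ℝ) ^ (c - 1) = (b : ℝ) := by
        rw [show c - 1 = ((n - 1 : ℕ) : ℤ) by omega, zpow_natCast, hbdef]
        push_cast; ring
      have hbR : (0 : ℝ) < (b : ℝ) := by exact_mod_cast hbpos
      rw [hzb, Int.ceil_eq_iff]
      constructor
      · push_cast
        rw [lt_div_iff₀ hbR]
        have : ((e - 1 : ℕ) : ℝ) * b < d := by exact_mod_cast he3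
        rw [Nat.cast_sub (by omega : 1 ≤ e)] at this
        push_cast at this
        linarith
      · push_cast
        rw [div_le_iff₀ hbR]
        exact_mod_cast he1
    rw [hceil, Wf_iff hq2 hn1 he_ge2 he_leq hqd he1 he3 m s, ← Nat.cast_le (α := ℤ)]
    push_cast [Nat.cast_sub hn1, Nat.cast_sub (show 1 ≤ e by omega),
      Nat.cast_sub (show 1 ≤ q by omega)]
    rw [← hcn]
    have hring : ((m:ℤ) - (n:ℤ)) * ((q:ℤ) - 1)
        = (m:ℤ)*((q:ℤ)-1) - ((n:ℤ)-1)*((q:ℤ)-1) - ((q:ℤ)-1) := by ring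
    constructor <;> intro h <;> linarith
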